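/- Let W' be a reflection subgroup of W, let i ∈ {1,2}, and let x, y ∈ Δ_i(W') with r_x ≠ r_y. Let n be the order of r_x·r_y (possibly infinite), and for 0 ≤ m < n let c_m, d_m, c'_m, d'_m be the (unique, since x and y are linearly independent) real constants with (⋯r_y r_x r_y)x = c_m·x + d_m·y (m alternating factors ending in r_y) and (⋯r_x r_y r_x)y = c'_m·x + d'_m·y (m alternating factors ending in r_x). Then c_m ≥ 0, d_m ≥ 0, c'_m ≥ 0 and d'_m ≥ 0 whenever m < n. -/

import Mathlib

open Pointwise

/-- The positive linear cone of a subset `A` of a real vector space: finite linear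
combinations of elements of `A` with all coefficients nonnegative and at least one
strictly positive. -/
def PLC {V : Type*} [AddCommGroup V] [Module ℝ V] (A : Set V) : Set V :=
  { v | ∃ c : V →₀ ℝ, (∀ a, 0 ≤ c a) ∧ ↑c.support ⊆ A ∧ c ≠ 0 ∧
          v = c.sum fun a t => t • a }

/-- `altEnd a b m` is the alternating product `⋯ a b a b` … of `m` factors,
ending with `b` (e.g. `altEnd a b 3 = b * a * b`). -/
def altEnd {G : Type*} [Monoid G] : G → G → ℕ → G
  | _, _, 0 => 1
  | a, b, m + 1 => altEnd b a m * b

/-- The class of `z` under the equivalence "being nonzero scalar multiples of each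
other" (the class `ẑ`). -/
def rayClass {V : Type*} [AddCommGroup V] [Module ℝ V] (z : V) : Set V :=
  { v | ∃ c : ℝ, c ≠ 0 ∧ v = c • z }

/-- The set `Â = {ẑ : z ∈ A}` of scalar-equivalence classes of elements of `A`. -/
def rayClasses {V : Type*} [AddCommGroup V] [Module ℝ V] (A : Set V) : Set (Set V) :=
  { C | ∃ z ∈ A, C = rayClass z }

/-- A Coxeter datum `(S, V₁, V₂, Π₁, Π₂, ⟨·,·⟩)` satisfying (D1)–(D5), together with
its associated abstract Coxeter group `W` (a group generated by involutions
`r s`, acting faithfully on `V₁` and `V₂` in the prescribed way, with the pairing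
`W`-invariant), the decomposition `Φᵢ = Φᵢ⁺ ⊎ Φᵢ⁻` of the paired root systems, the
`W`-equivariant bijection `φ : Φ₁ → Φ₂` (with inverse `phiInv`), and the reflections
`r_x ∈ T` attached to the roots `x ∈ Φ₁` (`refl₁`) resp. `y ∈ Φ₂` (`refl₂`). -/
structure CoxeterDatum (S : Type*) (V₁ : Type*) (V₂ : Type*) (W : Type*)
    [AddCommGroup V₁] [Module ℝ V₁] [AddCommGroup V₂] [Module ℝ V₂] [Group W] where
  pair : V₁ →ₗ[ℝ] V₂ →ₗ[ℝ] ℝ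
  α : S → V₁
  β : S → V₂
  α_inj : Function.Injective α
  β_inj : Function.Injective β
  D1 : ∀ s, pair (α s) (β s) = 1
  D2a : (0 : V₁) ∉ PLC (Set.range α)
  D2b : (0 : V₂) ∉ PLC (Set.range β)
  D2c : ∀ s, α s ∉ PLC (Set.range α \ {α s})
  D2d : ∀ s, β s ∉ PLC (Set.range β \ {β s})
  D3 : ∀ s t, s ≠ t → pair (α s) (β t) ≤ 0
  D4 : ∀ s t, pair (α s) (β t) = 0 → pair (α t) (β s) = 0
  D5 : ∀ s t, s ≠ t →
    (∃ m : ℕ, 2 ≤ m ∧ pair (α s) (β t) * pair (α t) (β s) = Real.cos (Real.pi / m) ^ 2) ∨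
      1 ≤ pair (α s) (β t) * pair (α t) (β s)
  /-- the Coxeter generators `R = {r s : s ∈ S}` of `W` -/
  r : S → W
  r_gen : Subgroup.closure (Set.range r) = ⊤
  r_ne_one : ∀ s, r s ≠ 1
  r_sq : ∀ s, r s * r s = 1
  /-- the faithful action of `W` on `V₁` -/
  ρ₁ : W →* Module.End ℝ V₁
  /-- the faithful action of `W` on `V₂` -/
  ρ₂ : W →* Module.End ℝ V₂
  ρ₁_inj : Function.Injective ρ₁
  ρ₂_inj : Function.Injective ρ₂
  hr₁ : ∀ s x, ρ₁ (r s) x = x - (2 * pair x (β s)) • α s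
  hr₂ : ∀ s y, ρ₂ (r s) y = y - (2 * pair (α s) y) • β s
  pair_inv : ∀ w x y, pair (ρ₁ w x) (ρ₂ w y) = pair x y
  /-- the `W`-equivariant bijection `φ : Φ₁ → Φ₂` -/
  phi : V₁ → V₂
  /-- the inverse `φ⁻¹ : Φ₂ → Φ₁` -/
  phiInv : V₂ → V₁
  /-- the reflection `r_x` corresponding to a root `x ∈ Φ₁` -/
  refl₁ : V₁ → W
  /-- the reflection `r_y` corresponding to a root `y ∈ Φ₂` -/
  refl₂ : V₂ → W
  decomp₁ : { v | ∃ w s, v = ρ₁ w (α s) } =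
      ({ v | ∃ w s, v = ρ₁ w (α s) } ∩ PLC (Set.range α)) ∪
        (-({ v | ∃ w s, v = ρ₁ w (α s) } ∩ PLC (Set.range α)))
  disj₁ : Disjoint ({ v | ∃ w s, v = ρ₁ w (α s) } ∩ PLC (Set.range α))
      (-({ v | ∃ w s, v = ρ₁ w (α s) } ∩ PLC (Set.range α)))
  decomp₂ : { v | ∃ w s, v = ρ₂ w (β s) } =
      ({ v | ∃ w s, v = ρ₂ w (β s) } ∩ PLC (Set.range β)) ∪
        (-({ v | ∃ w s, v = ρ₂ w (β s) } ∩ PLC (Set.range β)))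
  disj₂ : Disjoint ({ v | ∃ w s, v = ρ₂ w (β s) } ∩ PLC (Set.range β))
      (-({ v | ∃ w s, v = ρ₂ w (β s) } ∩ PLC (Set.range β)))
  phi_mem : ∀ x ∈ { v | ∃ w s, v = ρ₁ w (α s) }, phi x ∈ { v | ∃ w s, v = ρ₂ w (β s) }
  phiInv_mem : ∀ y ∈ { v | ∃ w s, v = ρ₂ w (β s) }, phiInv y ∈ { v | ∃ w s, v = ρ₁ w (α s) }
  phiInv_phi : ∀ x ∈ { v | ∃ w s, v = ρ₁ w (α s) }, phiInv (phi x) = x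
  phi_phiInv : ∀ y ∈ { v | ∃ w s, v = ρ₂ w (β s) }, phi (phiInv y) = y
  phi_simple : ∀ s, phi (α s) = β s
  phi_equiv : ∀ w, ∀ x ∈ { v | ∃ w s, v = ρ₁ w (α s) }, phi (ρ₁ w x) = ρ₂ w (phi x)
  refl₁_eq : ∀ w s, refl₁ (ρ₁ w (α s)) = w * r s * w⁻¹
  refl₂_eq : ∀ w s, refl₂ (ρ₂ w (β s)) = w * r s * w⁻¹
  refl₁_act : ∀ x ∈ { v | ∃ w s, v = ρ₁ w (α s) }, ∀ v,
      ρ₁ (refl₁ x) v = v - (2 * pair v (phi x)) • x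
  refl₂_act : ∀ y ∈ { v | ∃ w s, v = ρ₂ w (β s) }, ∀ v,
      ρ₂ (refl₂ y) v = v - (2 * pair (phiInv y) v) • y

namespace CoxeterDatum

variable {S V₁ V₂ W : Type*} [AddCommGroup V₁] [Module ℝ V₁]
  [AddCommGroup V₂] [Module ℝ V₂] [Group W]

variable (D : CoxeterDatum S V₁ V₂ W)

/-- The root system `Φ₁ = W Π₁`. -/
def Phi₁ : Set V₁ := { v | ∃ w s, v = D.ρ₁ w (D.α s) }

/-- The root system `Φ₂ = W Π₂`. -/
def Phi₂ : Set V₂ := { v | ∃ w s, v = D.ρ₂ w (D.β s) }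

/-- The positive roots `Φ₁⁺ = Φ₁ ∩ PLC Π₁`. -/
def PhiPos₁ : Set V₁ := D.Phi₁ ∩ PLC (Set.range D.α)

/-- The positive roots `Φ₂⁺ = Φ₂ ∩ PLC Π₂`. -/
def PhiPos₂ : Set V₂ := D.Phi₂ ∩ PLC (Set.range D.β)

/-- The negative roots `Φ₁⁻ = -Φ₁⁺`. -/
def PhiNeg₁ : Set V₁ := -D.PhiPos₁

/-- The negative roots `Φ₂⁻ = -Φ₂⁺`. -/
def PhiNeg₂ : Set V₂ := -D.PhiPos₂

/-- The set `T = ⋃_{w ∈ W} w R w⁻¹` of reflections of `W`. -/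
def T : Set W := { t | ∃ w s, t = w * D.r s * w⁻¹ }

/-- The length function `ℓ` of `W` with respect to the Coxeter generators `R`. -/
noncomputable def len (w : W) : ℕ :=
  sInf { n | ∃ l : List S, l.length = n ∧ (l.map D.r).prod = w }

/-- `N̄ w = {t ∈ T : ℓ(w t) < ℓ(w)}`. -/
noncomputable def Nbar (w : W) : Set W :=
  { t | t ∈ D.T ∧ D.len (w * t) < D.len w }

/-- `N₁ w = {ẑ : z ∈ Φ₁⁺, w z ∈ Φ₁⁻}`. -/
def N₁ (w : W) : Set (Set V₁) :=
  { C | ∃ z, z ∈ D.PhiPos₁ ∧ D.ρ₁ w z ∈ D.PhiNeg₁ ∧ C = rayClass z }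

/-- `N₂ w = {ẑ : z ∈ Φ₂⁺, w z ∈ Φ₂⁻}`. -/
def N₂ (w : W) : Set (Set V₂) :=
  { C | ∃ z, z ∈ D.PhiPos₂ ∧ D.ρ₂ w z ∈ D.PhiNeg₂ ∧ C = rayClass z }

/-- A subgroup `W'` of `W` is a reflection subgroup when `W' = ⟨W' ∩ T⟩`. -/
def IsReflectionSubgroup (W' : Subgroup W) : Prop :=
  W' = Subgroup.closure ((W' : Set W) ∩ D.T)

/-- `Φ₁(W') = {x ∈ Φ₁ : r_x ∈ W'}`. -/
def PhiSub₁ (W' : Subgroup W) : Set V₁ :=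
  { x | x ∈ D.Phi₁ ∧ D.refl₁ x ∈ W' }

/-- `Φ₂(W') = {y ∈ Φ₂ : r_y ∈ W'}`. -/
def PhiSub₂ (W' : Subgroup W) : Set V₂ :=
  { y | y ∈ D.Phi₂ ∧ D.refl₂ y ∈ W' }

/-- The canonical generators `S(W') = {t ∈ T : N̄(t) ∩ W' = {t}}`. -/
noncomputable def SW (W' : Subgroup W) : Set W :=
  { t | t ∈ D.T ∧ D.Nbar t ∩ (W' : Set W) = {t} }

/-- `Δ₁(W') = {x ∈ Φ₁⁺ : r_x ∈ S(W')}`. -/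
noncomputable def Delta₁ (W' : Subgroup W) : Set V₁ :=
  { x | x ∈ D.PhiPos₁ ∧ D.refl₁ x ∈ D.SW W' }

/-- `Δ₂(W') = {y ∈ Φ₂⁺ : r_y ∈ S(W')}`. -/
noncomputable def Delta₂ (W' : Subgroup W) : Set V₂ :=
  { y | y ∈ D.PhiPos₂ ∧ D.refl₂ y ∈ D.SW W' }

/-- The length function `ℓ_{W'}` of a reflection subgroup `W'` with respect to its
canonical generators `S(W')`. -/
noncomputable def lenIn (W' : Subgroup W) (w : W) : ℕ :=
  sInf { n | ∃ l : List W, l.length = n ∧ (∀ t ∈ l, t ∈ D.SW W') ∧ l.prod = w }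

end CoxeterDatum
section PLCLemmas

variable {V : Type*} [AddCommGroup V] [Module ℝ V] {A : Set V}

lemma plc_ne_zero (h0 : (0:V) ∉ PLC A) {p : V} (hp : p ∈ PLC A) : p ≠ 0 := by
  rintro rfl; exact h0 hp

lemma plc_add {p q : V} (hp : p ∈ PLC A) (hq : q ∈ PLC A) : p + q ∈ PLC A := by
  classical
  obtain ⟨c, hc0, hcs, hcne, rfl⟩ := hp
  obtain ⟨c', hc'0, hc's, hc'ne, rfl⟩ := hq
  refine ⟨c + c', fun a => add_nonneg (hc0 a) (hc'0 a), ?_, ?_, ?_⟩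
  · refine subset_trans (Finset.coe_subset.2 Finsupp.support_add) ?_
    rw [Finset.coe_union]; exact Set.union_subset hcs hc's
  · intro h
    obtain ⟨a, ha⟩ := Finsupp.ne_iff.1 hcne
    have h2 : c a + c' a = 0 := by
      have := Finsupp.ext_iff.1 h a; simpa using this
    have : c a = 0 := le_antisymm (by nlinarith [hc'0 a]) (hc0 a)
    exact ha (by simpa using this)
  · rw [Finsupp.sum_add_index']
    · intro a; exact zero_smul ℝ a
    · intro a t1 t2; exact add_smul t1 t2 a

lemma plc_smul {p : V} {c : ℝ} (hc : 0 < c) (hp : p ∈ PLC A) : c • p ∈ PLC A := by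
  obtain ⟨f, hf0, hfs, hfne, rfl⟩ := hp
  refine ⟨c • f, fun a => by
      simpa using mul_nonneg hc.le (hf0 a), ?_, ?_, ?_⟩
  · exact subset_trans (Finset.coe_subset.2 (Finsupp.support_smul)) hfs
  · exact smul_ne_zero hc.ne' hfne
  · rw [Finsupp.smul_sum, Finsupp.sum_smul_index']
    · simp [Finsupp.sum, smul_smul]
    · intro a; exact zero_smul ℝ a

lemma plc_single {a : V} (ha : a ∈ A) {c : ℝ} (hc : 0 < c) : c • a ∈ PLC A := by
  classical
  refine ⟨Finsupp.single a c, fun b => ?_, ?_, ?_, ?_⟩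
  · rcases eq_or_ne a b with rfl | h
    · simp [hc.le]
    · rw [Finsupp.single_apply_eq_zero.2 fun hb => absurd hb.symm h]
  · refine subset_trans (Finset.coe_subset.2 Finsupp.support_single_subset) (by simpa using ha)
  · simp [Finsupp.single_eq_zero, hc.ne']
  · rw [Finsupp.sum_single_index]; exact zero_smul ℝ a

lemma plc_combo {x y : V} {c d : ℝ} (hx : x ∈ PLC A) (hy : y ∈ PLC A)
    (hc : 0 ≤ c) (hd : 0 ≤ d) (h : 0 < c ∨ 0 < d) : c • x + d • y ∈ PLC A := by
  rcases hc.eq_or_lt with rfl | hc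
  · rcases h with h | h
    · exact absurd rfl h.ne
    · simpa using plc_smul h hy
  rcases hd.eq_or_lt with rfl | hd
  · simpa using plc_smul hc hx
  exact plc_add (plc_smul hc hx) (plc_smul hd hy)

/-- The key positive-cone lemma: if the sum of two elements of the positive cone of
`A` is a multiple of `α0 ∈ A`, then (given the (D2)-conditions) each of them is a
positive multiple of `α0`. -/
lemma plc_sum_eq_smul {α0 : V} (hA0 : (0:V) ∉ PLC A) (hAs : α0 ∉ PLC (A \ {α0}))
    (hα0 : α0 ∈ A) {z w : V} {c : ℝ}
    (hz : z ∈ PLC A) (hw : w ∈ PLC A) (h : z + w = c • α0) :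
    ∃ l : ℝ, 0 < l ∧ z = l • α0 := by
  classical
  -- first, c > 0
  have hcpos : 0 < c := by
    by_contra hc
    push_neg at hc
    rcases hc.eq_or_lt with rfl | hc
    · have h0 : z + w = 0 := by simpa using h
      exact hA0 (h0 ▸ plc_add hz hw)
    · have h0 : (0:V) = (z + w) + (-c) • α0 := by rw [h, ← add_smul]; simp
      exact hA0 (h0 ▸ plc_add (plc_add hz hw) (plc_single hα0 (by linarith)))
  obtain ⟨cz, hcz0, hczs, hczne, hzeq⟩ := hz
  obtain ⟨cw, hcw0, hcws, hcwne, hweq⟩ := hw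
  set e : V →₀ ℝ := cz + cw with he
  have he0 : ∀ a, 0 ≤ e a := fun a => add_nonneg (hcz0 a) (hcw0 a)
  have hes : ↑e.support ⊆ A := by
    refine subset_trans (Finset.coe_subset.2 Finsupp.support_add) ?_
    rw [Finset.coe_union]; exact Set.union_subset hczs hcws
  have hesum : e.sum (fun a t => t • a) = c • α0 := by
    rw [he, Finsupp.sum_add_index' (fun a => zero_smul ℝ a) (fun a t1 t2 => add_smul t1 t2 a),
      ← hzeq, ← hweq, h]
  -- erase α0
  set k : ℝ := e α0 with hk
  set e' : V →₀ ℝ := e.erase α0 with he'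
  have hsplit : e.sum (fun a t => t • a) = k • α0 + e'.sum (fun a t => t • a) := by
    conv_lhs => rw [← Finsupp.single_add_erase α0 e]
    rw [Finsupp.sum_add_index' (fun a => zero_smul ℝ a) (fun a t1 t2 => add_smul t1 t2 a)]
    congr 1
    rw [Finsupp.sum_single_index]; exact zero_smul ℝ α0
  have he'sum : e'.sum (fun a t => t • a) = (c - k) • α0 := by
    have h1 := hesum; rw [hsplit] at h1
    have h2 : e'.sum (fun a t => t • a) = c • α0 - k • α0 := by
      rw [← h1]; abel
    rw [h2, ← sub_smul]
  have he'0 : ∀ a, 0 ≤ e' a := by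
    intro a; rw [he']
    rcases eq_or_ne a α0 with rfl | hne
    · simp [Finsupp.erase_same]
    · rw [Finsupp.erase_ne hne]; exact he0 a
  have he's : ↑e'.support ⊆ A \ {α0} := by
    rw [he', Finsupp.support_erase]
    intro a ha
    simp only [Finset.coe_erase, Set.mem_diff, Set.mem_singleton_iff] at ha ⊢
    exact ⟨hes ha.1, ha.2⟩
  -- e' must be 0
  have he'zero : e' = 0 := by
    by_contra he'ne
    rcases lt_or_ge k c with hkc | hkc
    · -- α0 ∈ PLC (A \ {α0})
      have hck : (0:ℝ) < (c - k)⁻¹ := by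
        rw [inv_pos]; linarith
      refine hAs ⟨(c - k)⁻¹ • e', fun a => by
          simpa using mul_nonneg hck.le (he'0 a), ?_, ?_, ?_⟩
      · exact subset_trans (Finset.coe_subset.2 (Finsupp.support_smul)) he's
      · exact smul_ne_zero hck.ne' he'ne
      · rw [Finsupp.sum_smul_index' (fun a => zero_smul ℝ a)]
        have h3 : (e'.sum fun i c1 => ((c-k)⁻¹ • c1) • i)
            = (c-k)⁻¹ • e'.sum (fun a t => t • a) := by
          rw [Finsupp.smul_sum]; simp [smul_smul]
        rw [h3, he'sum, smul_smul, inv_mul_cancel₀ (by linarith), one_smul]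
    · -- 0 ∈ PLC A
      have hzero : (0:V) = (k - c) • α0 + e'.sum (fun a t => t • a) := by
        rw [he'sum, ← add_smul]; simp
      refine hA0 ?_
      rcases hkc.eq_or_lt with rfl | hkc'
      · rw [hzero]; simp only [sub_self, zero_smul, zero_add]
        exact ⟨e', he'0, subset_trans he's (Set.diff_subset), he'ne, rfl⟩
      · rw [hzero]
        refine plc_add (plc_single hα0 (by linarith)) ?_
        exact ⟨e', he'0, subset_trans he's (Set.diff_subset), he'ne, rfl⟩
  -- so e is supported on α0 only, and hence so is cz
  have hczsub : ∀ a, a ≠ α0 → cz a = 0 := by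
    intro a ha
    have hea : e a = 0 := by
      have h4 := Finsupp.ext_iff.1 he'zero a
      rw [he', Finsupp.erase_ne ha] at h4; simpa using h4
    have h1 : cz a + cw a = 0 := by simpa [he] using hea
    exact le_antisymm (by nlinarith [hcw0 a]) (hcz0 a)
  have hlne : cz α0 ≠ 0 := by
    intro h0
    refine hczne (Finsupp.ext fun a => ?_)
    rcases eq_or_ne a α0 with rfl | ha
    · simpa using h0
    · simpa using hczsub a ha
  refine ⟨cz α0, lt_of_le_of_ne (hcz0 α0) (Ne.symm hlne), ?_⟩
  rw [hzeq]
  have hczeq : cz = Finsupp.single α0 (cz α0) := by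
    ext a
    rcases eq_or_ne a α0 with rfl | ha
    · simp
    · rw [hczsub a ha, Finsupp.single_eq_of_ne' (Ne.symm ha)]
  rw [hczeq, Finsupp.sum_single_index (zero_smul ℝ α0)]
  simp

end PLCLemmas
section AltEnd

variable {G : Type*} [Group G]

lemma altEnd_succ_left (t u : G) : ∀ m, altEnd t u (m+1) = (if Even m then u else t) * altEnd t u m := by
  intro m
  induction m generalizing t u with
  | zero => simp [altEnd]
  | succ m ih =>
    show altEnd u t (m+1) * u = _
    rw [ih u t]
    by_cases hm : Even m <;>
      simp [altEnd, hm, Nat.even_add_one, mul_assoc]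

lemma altEnd_mem {W' : Subgroup G} {t u : G} (ht : t ∈ W') (hu : u ∈ W') :
    ∀ m, altEnd t u m ∈ W' := by
  intro m
  induction m generalizing t u with
  | zero => exact one_mem _
  | succ m ih => exact mul_mem (ih hu ht) hu

lemma aux_tu_pow {t u : G} : ∀ k, t * (u*t)^k * u = (t*u)^(k+1) := by
  intro k
  induction k with
  | zero => simp
  | succ k ih =>
    rw [pow_succ, pow_succ, ← ih]
    group

lemma altEnd_inv_mul {t u : G} (ht : t*t = 1) (hu : u*u = 1) :
    ∀ k, (altEnd u t k)⁻¹ * altEnd t u k = (t*u)^k := by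
  have hti : t⁻¹ = t := by rw [← mul_one t⁻¹, ← ht, ← mul_assoc, inv_mul_cancel, one_mul]
  have hui : u⁻¹ = u := by rw [← mul_one u⁻¹, ← hu, ← mul_assoc, inv_mul_cancel, one_mul]
  intro k
  induction k generalizing t u ht hu hti hui with
  | zero => simp [altEnd]
  | succ k ih =>
    show (altEnd t u k * t)⁻¹ * (altEnd u t k * u) = _
    rw [mul_inv_rev, hti]
    have h1 : (altEnd t u k)⁻¹ * altEnd u t k = ((altEnd u t k)⁻¹ * altEnd t u k)⁻¹ := by
      rw [mul_inv_rev, inv_inv]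
    calc t * (altEnd t u k)⁻¹ * (altEnd u t k * u)
        = t * ((altEnd t u k)⁻¹ * altEnd u t k) * u := by group
      _ = t * ((t*u)^k)⁻¹ * u := by rw [h1, ih ht hu hti hui]
      _ = t * (u*t)^k * u := by rw [← inv_pow, mul_inv_rev, hti, hui]
      _ = (t*u)^(k+1) := aux_tu_pow k

end AltEnd

namespace CoxeterDatum

variable {S V₁ V₂ W : Type*} [AddCommGroup V₁] [Module ℝ V₁]
  [AddCommGroup V₂] [Module ℝ V₂] [Group W]

variable (D : CoxeterDatum S V₁ V₂ W)

/- ### Length lemmas -/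

lemma r_inv (s : S) : (D.r s)⁻¹ = D.r s := by
  rw [← mul_one (D.r s)⁻¹, ← D.r_sq s, ← mul_assoc, inv_mul_cancel, one_mul]

lemma prod_reverse_inv : ∀ l : List S, ((l.reverse.map D.r)).prod = ((l.map D.r).prod)⁻¹ := by
  intro l
  induction l with
  | nil => simp
  | cons a l ih =>
    simp only [List.map_cons, List.prod_cons, List.reverse_cons, List.map_append,
      List.prod_append, mul_inv_rev, ih]
    simp [D.r_inv]

lemma exists_word (w : W) : ∃ l : List S, (l.map D.r).prod = w := by
  have hw : w ∈ Subgroup.closure (Set.range D.r) := by rw [D.r_gen]; trivial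
  induction hw using Subgroup.closure_induction with
  | mem x hx =>
    obtain ⟨s, rfl⟩ := hx
    exact ⟨[s], by simp⟩
  | one => exact ⟨[], by simp⟩
  | mul x y _ _ hx hy =>
    obtain ⟨l1, rfl⟩ := hx; obtain ⟨l2, rfl⟩ := hy
    exact ⟨l1 ++ l2, by simp⟩
  | inv x _ hx =>
    obtain ⟨l, rfl⟩ := hx
    exact ⟨l.reverse, D.prod_reverse_inv l⟩

lemma lenSet_nonempty (w : W) :
    { n | ∃ l : List S, l.length = n ∧ (l.map D.r).prod = w }.Nonempty := by
  obtain ⟨l, hl⟩ := D.exists_word w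
  exact ⟨l.length, l, rfl, hl⟩

lemma len_exists (w : W) : ∃ l : List S, l.length = D.len w ∧ (l.map D.r).prod = w :=
  Nat.sInf_mem (D.lenSet_nonempty w)

lemma len_le {w : W} {l : List S} (hl : (l.map D.r).prod = w) : D.len w ≤ l.length :=
  Nat.sInf_le ⟨l, rfl, hl⟩

lemma len_one : D.len 1 = 0 :=
  Nat.le_zero.1 (D.len_le (l := []) (by simp))

lemma eq_one_of_len_eq_zero {w : W} (h : D.len w = 0) : w = 1 := by
  obtain ⟨l, hl, hp⟩ := D.len_exists w
  rw [h, List.length_eq_zero_iff] at hl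
  rw [← hp, hl]; simp

lemma len_mul_le (w w' : W) : D.len (w * w') ≤ D.len w + D.len w' := by
  obtain ⟨l, hl, hp⟩ := D.len_exists w
  obtain ⟨l', hl', hp'⟩ := D.len_exists w'
  have : ((l ++ l').map D.r).prod = w * w' := by simp [hp, hp']
  simpa [hl, hl'] using D.len_le this

lemma len_r_mul_le (s : S) (w : W) : D.len (D.r s * w) ≤ 1 + D.len w := by
  obtain ⟨l, hl, hp⟩ := D.len_exists w
  have : ((s :: l).map D.r).prod = D.r s * w := by simp [hp]
  simpa [hl, Nat.add_comm] using D.len_le this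

end CoxeterDatum
namespace CoxeterDatum

variable {S V₁ V₂ W : Type*} [AddCommGroup V₁] [Module ℝ V₁]
  [AddCommGroup V₂] [Module ℝ V₂] [Group W]

variable (D : CoxeterDatum S V₁ V₂ W)

/- ### Root basics -/

lemma alpha_mem_Phi (s : S) : D.α s ∈ D.Phi₁ := ⟨1, s, by simp⟩

lemma rho_mem_Phi {z : V₁} (hz : z ∈ D.Phi₁) (w : W) : D.ρ₁ w z ∈ D.Phi₁ := by
  obtain ⟨v, s, rfl⟩ := hz
  exact ⟨w * v, s, by rw [map_mul]; rfl⟩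

lemma rho_r_alpha (s : S) : D.ρ₁ (D.r s) (D.α s) = -D.α s := by
  rw [D.hr₁ s (D.α s), D.D1, mul_one, two_smul]; abel

lemma neg_mem_Phi {z : V₁} (hz : z ∈ D.Phi₁) : -z ∈ D.Phi₁ := by
  obtain ⟨v, s, rfl⟩ := hz
  refine ⟨v * D.r s, s, ?_⟩
  rw [map_mul, Module.End.mul_apply, D.rho_r_alpha, map_neg]

lemma pos_or_neg {z : V₁} (hz : z ∈ D.Phi₁) : z ∈ D.PhiPos₁ ∨ z ∈ D.PhiNeg₁ := by
  have h := D.decomp₁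
  have hz' : z ∈ ({ v | ∃ w s, v = D.ρ₁ w (D.α s) } : Set V₁) := hz
  rw [h] at hz'
  exact hz'

lemma not_pos_neg {z : V₁} (hp : z ∈ D.PhiPos₁) (hn : z ∈ D.PhiNeg₁) : False :=
  Set.disjoint_left.mp D.disj₁ hp hn

lemma neg_mem_iff {z : V₁} : z ∈ D.PhiNeg₁ ↔ -z ∈ D.PhiPos₁ := Set.mem_neg

lemma pos_sub_Phi {z : V₁} (hz : z ∈ D.PhiPos₁) : z ∈ D.Phi₁ := hz.1

lemma pos_plc {z : V₁} (hz : z ∈ D.PhiPos₁) : z ∈ PLC (Set.range D.α) := hz.2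

lemma pos_ne_zero {z : V₁} (hz : z ∈ D.PhiPos₁) : z ≠ 0 :=
  plc_ne_zero D.D2a hz.2

lemma mem_pos_of_coords {z x y : V₁} {c d : ℝ} (hz : z ∈ D.Phi₁)
    (hx : x ∈ D.PhiPos₁) (hy : y ∈ D.PhiPos₁) (h : z = c • x + d • y)
    (hc : 0 ≤ c) (hd : 0 ≤ d) (hcd : 0 < c ∨ 0 < d) : z ∈ D.PhiPos₁ :=
  ⟨hz, h ▸ plc_combo hx.2 hy.2 hc hd hcd⟩

lemma mem_neg_of_coords {z x y : V₁} {c d : ℝ} (hz : z ∈ D.Phi₁)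
    (hx : x ∈ D.PhiPos₁) (hy : y ∈ D.PhiPos₁) (h : z = c • x + d • y)
    (hc : c ≤ 0) (hd : d ≤ 0) (hcd : c < 0 ∨ d < 0) : z ∈ D.PhiNeg₁ := by
  rw [neg_mem_iff]
  refine D.mem_pos_of_coords (c := -c) (d := -d) (D.neg_mem_Phi hz) hx hy
    (by rw [h]; module) ?_ ?_ ?_
  · linarith
  · linarith
  · rcases hcd with h' | h'
    · exact Or.inl (by linarith)
    · exact Or.inr (by linarith)

/- ### `phi` and reflections on roots -/

lemma phi_root (w : W) (s : S) : D.phi (D.ρ₁ w (D.α s)) = D.ρ₂ w (D.β s) := by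
  rw [D.phi_equiv w (D.α s) (D.alpha_mem_Phi s), D.phi_simple]

lemma pair_phi_self {z : V₁} (hz : z ∈ D.Phi₁) : D.pair z (D.phi z) = 1 := by
  obtain ⟨w, s, rfl⟩ := hz
  rw [D.phi_root, D.pair_inv, D.D1]

lemma refl_mem_T {z : V₁} (hz : z ∈ D.Phi₁) : D.refl₁ z ∈ D.T := by
  obtain ⟨w, s, rfl⟩ := hz
  exact ⟨w, s, D.refl₁_eq w s⟩

lemma refl_sq {z : V₁} (hz : z ∈ D.Phi₁) : D.refl₁ z * D.refl₁ z = 1 := by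
  obtain ⟨w, s, rfl⟩ := hz
  have key : (w * D.r s * w⁻¹) * (w * D.r s * w⁻¹) = w * (D.r s * D.r s) * w⁻¹ := by
    group
  rw [D.refl₁_eq w s, key, D.r_sq]
  group

lemma refl_inv {z : V₁} (hz : z ∈ D.Phi₁) : (D.refl₁ z)⁻¹ = D.refl₁ z := by
  rw [← mul_one (D.refl₁ z)⁻¹, ← D.refl_sq hz, ← mul_assoc, inv_mul_cancel, one_mul]

lemma refl_act {z : V₁} (hz : z ∈ D.Phi₁) (v : V₁) :
    D.ρ₁ (D.refl₁ z) v = v - (2 * D.pair v (D.phi z)) • z :=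
  D.refl₁_act z hz v

lemma rho_refl_self {z : V₁} (hz : z ∈ D.Phi₁) : D.ρ₁ (D.refl₁ z) z = -z := by
  rw [D.refl_act hz, D.pair_phi_self hz, mul_one, two_smul]; abel

lemma refl_conj {z : V₁} (hz : z ∈ D.Phi₁) (w : W) :
    D.refl₁ (D.ρ₁ w z) = w * D.refl₁ z * w⁻¹ := by
  obtain ⟨v, s, rfl⟩ := hz
  have h1 : D.ρ₁ w (D.ρ₁ v (D.α s)) = D.ρ₁ (w * v) (D.α s) := by
    rw [map_mul]; rfl
  rw [h1, D.refl₁_eq, D.refl₁_eq, mul_inv_rev]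
  group

lemma refl₂_phi {z : V₁} (hz : z ∈ D.Phi₁) : D.refl₂ (D.phi z) = D.refl₁ z := by
  obtain ⟨w, s, rfl⟩ := hz
  rw [D.phi_root, D.refl₂_eq, D.refl₁_eq]

lemma rho₂_refl_act {z : V₁} (hz : z ∈ D.Phi₁) (v : V₂) :
    D.ρ₂ (D.refl₁ z) v = v - (2 * D.pair z v) • D.phi z := by
  rw [← D.refl₂_phi hz, D.refl₂_act (D.phi z) (D.phi_mem z hz), D.phiInv_phi z hz]

/- ### Proportional roots give the same reflection -/

lemma phi_smul {z1 z2 : V₁} (h1 : z1 ∈ D.Phi₁) (h2 : z2 ∈ D.Phi₁) {c : ℝ}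
    (hc : c ≠ 0) (h : z2 = c • z1) : D.phi z2 = c⁻¹ • D.phi z1 := by
  have p1 : D.pair z1 (D.phi z2) = c⁻¹ := by
    have h5 := D.pair_phi_self h2
    nth_rewrite 1 [h] at h5
    rw [map_smul, LinearMap.smul_apply, smul_eq_mul] at h5
    rw [inv_eq_one_div, eq_div_iff hc]
    linarith [h5]
  have step1 : D.ρ₁ (D.refl₁ z1) z2 = -z2 := by
    rw [h, map_smul, D.rho_refl_self h1, smul_neg]
  have e1 : D.phi (-z2) = D.phi z2 - (2 * D.pair z1 (D.phi z2)) • D.phi z1 := by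
    rw [← step1, D.phi_equiv _ z2 h2, D.rho₂_refl_act h1]
  have e2 : D.phi (-z2) = -D.phi z2 := by
    have step2 : D.ρ₁ (D.refl₁ z2) z2 = -z2 := D.rho_refl_self h2
    rw [← step2, D.phi_equiv _ z2 h2, D.rho₂_refl_act h2, D.pair_phi_self h2]
    rw [mul_one, two_smul]; abel
  rw [e2, p1] at e1
  have h7 : (2 * c⁻¹) • D.phi z1 = D.phi z2 + D.phi z2 := by
    have e3 : -D.phi z2 + (2 * c⁻¹) • D.phi z1 = D.phi z2 := eq_sub_iff_add_eq.mp e1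
    calc (2 * c⁻¹) • D.phi z1
        = D.phi z2 + (-D.phi z2 + (2 * c⁻¹) • D.phi z1) := by abel
      _ = D.phi z2 + D.phi z2 := by rw [e3]
  have h8 : (2⁻¹ : ℝ) • (D.phi z2 + D.phi z2) = D.phi z2 := by
    rw [← two_smul ℝ, smul_smul]; norm_num
  calc D.phi z2 = (2⁻¹:ℝ) • (D.phi z2 + D.phi z2) := h8.symm
    _ = (2⁻¹:ℝ) • ((2 * c⁻¹) • D.phi z1) := by rw [h7]
    _ = c⁻¹ • D.phi z1 := by rw [smul_smul]; congr 1; field_simp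

lemma refl_eq_of_smul {z1 z2 : V₁} (h1 : z1 ∈ D.Phi₁) (h2 : z2 ∈ D.Phi₁) {c : ℝ}
    (hc : c ≠ 0) (h : z2 = c • z1) : D.refl₁ z2 = D.refl₁ z1 := by
  apply D.ρ₁_inj
  apply LinearMap.ext
  intro v
  rw [D.refl_act h1, D.refl_act h2, D.phi_smul h1 h2 hc h, h]
  rw [map_smul, smul_eq_mul, smul_smul]
  congr 1
  field_simp

/- ### Simple reflections and positive roots -/

lemma simple_reflect_ray {z : V₁} {s : S} (hz : z ∈ D.PhiPos₁)
    (hneg : D.ρ₁ (D.r s) z ∈ D.PhiNeg₁) : ∃ l : ℝ, 0 < l ∧ z = l • D.α s := by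
  have key : z + (-(D.ρ₁ (D.r s) z)) = (2 * D.pair z (D.β s)) • D.α s := by
    rw [D.hr₁ s z]; abel
  exact plc_sum_eq_smul D.D2a (D.D2c s) ⟨s, rfl⟩ hz.2
    ((D.neg_mem_iff.1 hneg).2) key

end CoxeterDatum
namespace CoxeterDatum

variable {S V₁ V₂ W : Type*} [AddCommGroup V₁] [Module ℝ V₁]
  [AddCommGroup V₂] [Module ℝ V₂] [Group W]

variable (D : CoxeterDatum S V₁ V₂ W)

lemma refl_alpha (s : S) : D.refl₁ (D.α s) = D.r s := by
  have h := D.refl₁_eq 1 s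
  rw [map_one] at h
  simpa using h

/-- The fundamental fact: if `w` makes the positive root `z` negative, then
`ℓ(w r_z) < ℓ(w)`. -/
lemma len_lt_of_rho_neg : ∀ (w : W) {z : V₁}, z ∈ D.PhiPos₁ → D.ρ₁ w z ∈ D.PhiNeg₁ →
    D.len (w * D.refl₁ z) < D.len w := by
  suffices H : ∀ n (w : W), ∀ {z : V₁}, D.len w = n → z ∈ D.PhiPos₁ →
      D.ρ₁ w z ∈ D.PhiNeg₁ → D.len (w * D.refl₁ z) < D.len w by
    intro w z hz hneg; exact H (D.len w) w rfl hz hneg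
  intro n
  induction n using Nat.strong_induction_on with
  | _ n ih =>
    intro w z hlen hz hneg
    match n, hlen with
    | 0, hlen =>
      exfalso
      have hw1 : w = 1 := D.eq_one_of_len_eq_zero hlen
      rw [hw1, map_one] at hneg
      exact D.not_pos_neg hz hneg
    | (k+1), hlen =>
      obtain ⟨l, hl, hp⟩ := D.len_exists w
      rw [hlen] at hl
      match l, hl with
      | (s :: l'), hl =>
        have hl' : l'.length = k := by simpa using hl
        set w₂ := ((l'.map D.r)).prod with hw₂
        have hww : w = D.r s * w₂ := by rw [← hp]; simp [hw₂]
        have hw2le : D.len w₂ ≤ k := by simpa [hl'] using D.len_le (l := l') rfl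
        have hz1 : z ∈ D.Phi₁ := hz.1
        have hz2 : D.ρ₁ w₂ z ∈ D.Phi₁ := D.rho_mem_Phi hz1 w₂
        have hsplit : D.ρ₁ w z = D.ρ₁ (D.r s) (D.ρ₁ w₂ z) := by
          rw [hww, map_mul, Module.End.mul_apply]
        rcases D.pos_or_neg hz2 with hpos2 | hneg2
        · -- w₂ z positive, so w₂ z is a positive multiple of α s
          have hneg' : D.ρ₁ (D.r s) (D.ρ₁ w₂ z) ∈ D.PhiNeg₁ := by rw [← hsplit]; exact hneg
          obtain ⟨c, hc, hcz⟩ := D.simple_reflect_ray hpos2 hneg'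
          have h1 : D.refl₁ (D.ρ₁ w₂ z) = D.r s := by
            rw [D.refl_eq_of_smul (D.alpha_mem_Phi s) hz2 hc.ne' hcz, D.refl_alpha]
          have h2 : D.refl₁ (D.ρ₁ w₂ z) = w₂ * D.refl₁ z * w₂⁻¹ := D.refl_conj hz1 w₂
          have h3 : w * D.refl₁ z = w₂ := by
            rw [hww, ← h1, h2]
            have hrr : D.refl₁ z * D.refl₁ z = 1 := D.refl_sq hz1
            calc w₂ * D.refl₁ z * w₂⁻¹ * w₂ * D.refl₁ z
                = w₂ * (D.refl₁ z * D.refl₁ z) := by group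
              _ = w₂ := by rw [hrr, mul_one]
          rw [h3, hlen]
          omega
        · -- w₂ z negative: use the induction hypothesis
          have hlt : D.len (w₂ * D.refl₁ z) < D.len w₂ :=
            ih (D.len w₂) (by omega) w₂ rfl hz hneg2
          have hb : D.len (w * D.refl₁ z) ≤ 1 + D.len (w₂ * D.refl₁ z) := by
            rw [hww, mul_assoc]
            exact D.len_r_mul_le s (w₂ * D.refl₁ z)
          rw [hlen]
          omega

/- ### Canonical generators -/

variable {W' : Subgroup W}

lemma delta_refl_mem {x : V₁} (hx : x ∈ D.Delta₁ W') : D.refl₁ x ∈ W' := by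
  have h := hx.2.2
  have h2 : D.refl₁ x ∈ ({D.refl₁ x} : Set W) := rfl
  rw [← h] at h2
  exact h2.2

lemma key_canonical {x : V₁} (hx : x ∈ D.Delta₁ W') {z : V₁} (hz : z ∈ D.PhiPos₁)
    (hzW : D.refl₁ z ∈ W') (hneg : D.ρ₁ (D.refl₁ x) z ∈ D.PhiNeg₁) :
    D.refl₁ z = D.refl₁ x := by
  have hlt := D.len_lt_of_rho_neg (D.refl₁ x) hz hneg
  have hmem : D.refl₁ z ∈ D.Nbar (D.refl₁ x) ∩ (W' : Set W) :=
    ⟨⟨D.refl_mem_T hz.1, hlt⟩, hzW⟩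
  rw [hx.2.2] at hmem
  exact hmem

lemma root_eq_smul_of_refl_eq {z x : V₁} (hz : z ∈ D.Phi₁) (hx1 : x ∈ D.Phi₁)
    (h : D.refl₁ z = D.refl₁ x) : z = (D.pair z (D.phi x)) • x := by
  have h1 : z - (2 * D.pair z (D.phi x)) • x = -z := by
    rw [← D.refl_act hx1 z, ← h, D.rho_refl_self hz]
  have h2 : (2 * D.pair z (D.phi x)) • x = z + z := by
    calc (2 * D.pair z (D.phi x)) • x
        = z - (z - (2 * D.pair z (D.phi x)) • x) := by abel
      _ = z - (-z) := by rw [h1]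
      _ = z + z := by abel
  have h4 : (2:ℝ) • z = (2 * D.pair z (D.phi x)) • x := by rw [h2, two_smul]
  calc z = (2⁻¹:ℝ) • ((2:ℝ) • z) := by rw [smul_smul]; norm_num
    _ = (2⁻¹:ℝ) • ((2 * D.pair z (D.phi x)) • x) := by rw [h4]
    _ = (D.pair z (D.phi x)) • x := by
        rw [smul_smul, show (2⁻¹:ℝ)*(2*D.pair z (D.phi x)) = D.pair z (D.phi x) by ring]

lemma pos_coef {z x : V₁} (hz : z ∈ D.PhiPos₁) (hx1 : x ∈ D.PhiPos₁) {l : ℝ}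
    (h : z = l • x) : 0 < l := by
  rcases lt_or_ge 0 l with h' | h'
  · exact h'
  rcases h'.eq_or_lt with rfl | hl
  · exact absurd (by simpa using h) (D.pos_ne_zero hz)
  · exfalso
    refine D.not_pos_neg hz (D.mem_neg_of_coords (c := l) (d := 0) hz.1 hx1 hx1 ?_ h' le_rfl (Or.inl hl))
    rw [h]; module

lemma no_smul {x y : V₁} (hx : x ∈ D.Delta₁ W') (hy : y ∈ D.Delta₁ W')
    (hne : D.refl₁ x ≠ D.refl₁ y) : ∀ c : ℝ, y ≠ c • x := by
  intro c h
  have hy0 : y ≠ 0 := D.pos_ne_zero hy.1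
  have hc : c ≠ 0 := by rintro rfl; exact hy0 (by simpa using h)
  have hneg : D.ρ₁ (D.refl₁ x) y ∈ D.PhiNeg₁ := by
    have : D.ρ₁ (D.refl₁ x) y = -y := by
      rw [h, map_smul, D.rho_refl_self hx.1.1, smul_neg, ← h]
    rw [this, D.neg_mem_iff, neg_neg]
    exact hy.1
  exact hne (D.key_canonical hx hy.1 (D.delta_refl_mem hy) hneg).symm

lemma coords_unique {x y : V₁} (hx : x ∈ D.Delta₁ W') (hy : y ∈ D.Delta₁ W')
    (hne : D.refl₁ x ≠ D.refl₁ y) {c d c' d' : ℝ}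
    (h : c • x + d • y = c' • x + d' • y) : c = c' ∧ d = d' := by
  have hd : d = d' := by
    by_contra hdne
    have h0 : (c - c') • x + (d - d') • y = 0 := by
      have e : (c - c') • x + (d - d') • y = (c • x + d • y) - (c' • x + d' • y) := by
        rw [sub_smul, sub_smul]; abel
      rw [e, h, sub_self]
    have h1 : (d - d') • y = (c' - c) • x := by
      calc (d - d') • y = ((c - c') • x + (d - d') • y) - (c - c') • x := by abel
        _ = 0 - (c - c') • x := by rw [h0]
        _ = (c' - c) • x := by
            rw [zero_sub, ← neg_smul, show -(c - c') = c' - c by ring]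
    have h2 : y = ((d - d')⁻¹ * (c' - c)) • x := by
      rw [mul_smul, ← h1, smul_smul, inv_mul_cancel₀ (sub_ne_zero.2 hdne), one_smul]
    exact D.no_smul hx hy hne _ h2
  subst hd
  refine ⟨?_, rfl⟩
  have h1 : (c - c') • x = 0 := by
    rw [sub_smul, sub_eq_zero]
    exact add_right_cancel h
  rcases smul_eq_zero.1 h1 with h2 | h2
  · exact sub_eq_zero.1 h2
  · exact absurd h2 (D.pos_ne_zero hx.1)

end CoxeterDatum
namespace CoxeterDatum

variable {S V₁ V₂ W : Type*} [AddCommGroup V₁] [Module ℝ V₁]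
  [AddCommGroup V₂] [Module ℝ V₂] [Group W]

variable (D : CoxeterDatum S V₁ V₂ W) {W' : Subgroup W}

lemma rho_combo_left {x y : V₁} (hx1 : x ∈ D.Phi₁) (hy1 : y ∈ D.Phi₁) (c d : ℝ) :
    D.ρ₁ (D.refl₁ x) (c • x + d • y)
      = (-c - 2 * D.pair y (D.phi x) * d) • x + d • y := by
  rw [map_add, map_smul, map_smul, D.rho_refl_self hx1, D.refl_act hx1 y]
  module

lemma rho_combo_right {x y : V₁} (hx1 : x ∈ D.Phi₁) (hy1 : y ∈ D.Phi₁) (c d : ℝ) :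
    D.ρ₁ (D.refl₁ y) (c • x + d • y)
      = c • x + (-d - 2 * D.pair x (D.phi y) * c) • y := by
  rw [map_add, map_smul, map_smul, D.rho_refl_self hy1, D.refl_act hy1 x]
  module

/-- Statement (A): distinct canonical generators pair nonpositively. -/
lemma pair_nonpos {x y : V₁} (hx : x ∈ D.Delta₁ W') (hy : y ∈ D.Delta₁ W')
    (hne : D.refl₁ x ≠ D.refl₁ y) : D.pair x (D.phi y) ≤ 0 := by
  by_contra hpa
  push_neg at hpa
  set t := D.refl₁ x with hts
  set u := D.refl₁ y with hus
  set pa := D.pair x (D.phi y) with hpas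
  set pb := D.pair y (D.phi x) with hpbs
  have hx1 : x ∈ D.Phi₁ := hx.1.1
  have hy1 : y ∈ D.Phi₁ := hy.1.1
  have htW : t ∈ W' := D.delta_refl_mem hx
  have huW : u ∈ W' := D.delta_refl_mem hy
  -- the root z₁ = u x
  have hz₁Φ : D.ρ₁ u x ∈ D.Phi₁ := D.rho_mem_Phi hx1 u
  have hz₁co : D.ρ₁ u x = (1:ℝ) • x + (-(2*pa)) • y := by
    rw [D.refl_act hy1 x]; module
  have hz₁pos : D.ρ₁ u x ∈ D.PhiPos₁ := by
    rcases D.pos_or_neg hz₁Φ with h | h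
    · exact h
    · exact absurd (D.key_canonical hy hx.1 htW h) hne
  -- 4 pa pb < 1
  have h4 : 4 * pa * pb < 1 := by
    rcases le_or_gt pb 0 with hpb | hpb
    · nlinarith
    · -- z'₁ = t y is positive
      have hz'Φ : D.ρ₁ t y ∈ D.Phi₁ := D.rho_mem_Phi hy1 t
      have hz'pos : D.ρ₁ t y ∈ D.PhiPos₁ := by
        rcases D.pos_or_neg hz'Φ with h | h
        · exact h
        · exact absurd (D.key_canonical hx hy.1 huW h) hne.symm
      have hsum : D.ρ₁ u x + (2*pa) • (D.ρ₁ t y) = (1 - 4*pa*pb) • x := by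
        rw [D.refl_act hy1 x, D.refl_act hx1 y]; module
      by_contra hge
      push_neg at hge
      rcases hge.eq_or_lt with heq | hlt
      · refine D.D2a ?_
        have h0 : (0:V₁) = D.ρ₁ u x + (2*pa) • (D.ρ₁ t y) := by
          rw [hsum, ← heq, sub_self, zero_smul]
        exact h0 ▸ plc_add hz₁pos.2 (plc_smul (by linarith) hz'pos.2)
      · refine D.D2a ?_
        have h0 : (0:V₁) = (D.ρ₁ u x + (2*pa) • (D.ρ₁ t y)) + (4*pa*pb - 1) • x := by
          rw [hsum, ← add_smul]
          rw [show 1 - 4*pa*pb + (4*pa*pb - 1) = 0 by ring, zero_smul]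
        exact h0 ▸ plc_add (plc_add hz₁pos.2 (plc_smul (by linarith) hz'pos.2))
          (plc_smul (by linarith) hx.1.2)
  -- t z₁ is negative
  have hz₂co : D.ρ₁ t (D.ρ₁ u x) = (4*pa*pb - 1) • x + (-(2*pa)) • y := by
    rw [hz₁co, D.rho_combo_left hx1 hy1]
    module
  have hz₂neg : D.ρ₁ t (D.ρ₁ u x) ∈ D.PhiNeg₁ :=
    D.mem_neg_of_coords (D.rho_mem_Phi hz₁Φ t) hx.1 hy.1 hz₂co (by nlinarith)
      (by nlinarith) (Or.inr (by nlinarith))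
  -- canonicity forces u t u⁻¹ = t
  have hreflz₁ : D.refl₁ (D.ρ₁ u x) = u * t * u⁻¹ := D.refl_conj hx1 u
  have hreflW : D.refl₁ (D.ρ₁ u x) ∈ W' := by
    rw [hreflz₁]; exact mul_mem (mul_mem huW htW) (inv_mem huW)
  have h5 : u * t * u⁻¹ = t := by
    rw [← hreflz₁]; exact D.key_canonical hx hz₁pos hreflW hz₂neg
  have hcomm : u * t = t * u := by
    have h6 := congrArg (· * u) h5
    simpa [mul_assoc] using h6
  have hsq : (t * u) * (t * u) = 1 := by
    calc (t * u) * (t * u) = t * (u * t) * u := by group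
      _ = t * (t * u) * u := by rw [hcomm]
      _ = (t * t) * (u * u) := by group
      _ = 1 := by rw [D.refl_sq hx1, D.refl_sq hy1, one_mul]
  -- but then the action on x gives a contradiction
  have e2 : D.ρ₁ t (D.ρ₁ u x) = (4*pa*pb - 1) • x + (-(2*pa)) • y := hz₂co
  have e3 : D.ρ₁ u (D.ρ₁ t (D.ρ₁ u x)) =
      (4*pa*pb - 1) • x + (2*pa*(2 - 4*pa*pb)) • y := by
    rw [e2, D.rho_combo_right hx1 hy1]
    module
  have e4 : D.ρ₁ t (D.ρ₁ u (D.ρ₁ t (D.ρ₁ u x))) =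
      (-(4*pa*pb - 1) - 2*pb*(2*pa*(2 - 4*pa*pb))) • x + (2*pa*(2 - 4*pa*pb)) • y := by
    rw [e3, D.rho_combo_left hx1 hy1]
  have e5 : D.ρ₁ ((t * u) * (t * u)) x
      = D.ρ₁ t (D.ρ₁ u (D.ρ₁ t (D.ρ₁ u x))) := by
    simp only [map_mul, Module.End.mul_apply]
  have e6 : (1:ℝ) • x + (0:ℝ) • y
      = (-(4*pa*pb - 1) - 2*pb*(2*pa*(2 - 4*pa*pb))) • x + (2*pa*(2 - 4*pa*pb)) • y := by
    rw [← e4, ← e5, hsq, map_one]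
    simp
  have h7 := (D.coords_unique hx hy hne e6).2
  nlinarith

/-- Statement (M): coefficients of a positive root of `W'` over canonical `x, y`:
the `y`-coefficient is nonnegative. -/
lemma pos_root_coord_nonneg {x y : V₁} (hx : x ∈ D.Delta₁ W') (hy : y ∈ D.Delta₁ W')
    (hne : D.refl₁ x ≠ D.refl₁ y) {z : V₁} {c d : ℝ} (hz : z ∈ D.PhiPos₁)
    (hzW : D.refl₁ z ∈ W') (hcd : z = c • x + d • y) : 0 ≤ d := by
  by_contra hd
  push_neg at hd
  have hx1 : x ∈ D.Phi₁ := hx.1.1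
  have hy1 : y ∈ D.Phi₁ := hy.1.1
  have hpb : D.pair y (D.phi x) ≤ 0 := D.pair_nonpos hy hx hne.symm
  have hc : 0 < c := by
    rcases lt_or_ge 0 c with h | h
    · exact h
    · exact absurd (D.mem_neg_of_coords hz.1 hx.1 hy.1 hcd h hd.le (Or.inr hd))
        (fun hn => D.not_pos_neg hz hn)
  have hco : D.ρ₁ (D.refl₁ x) z = (-c - 2 * D.pair y (D.phi x) * d) • x + d • y := by
    rw [hcd, D.rho_combo_left hx1 hy1]
  have hneg : D.ρ₁ (D.refl₁ x) z ∈ D.PhiNeg₁ :=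
    D.mem_neg_of_coords (D.rho_mem_Phi hz.1 _) hx.1 hy.1 hco (by nlinarith) hd.le
      (Or.inr hd)
  have h1 : D.refl₁ z = D.refl₁ x := D.key_canonical hx hz hzW hneg
  have h2 : z = (D.pair z (D.phi x)) • x := D.root_eq_smul_of_refl_eq hz.1 hx1 h1
  have h3 : c • x + d • y = (D.pair z (D.phi x)) • x + (0:ℝ) • y := by
    rw [zero_smul, add_zero, ← h2, hcd]
  have := (D.coords_unique hx hy hne h3).2
  linarith

/-- Statement (III): the alternating orbit of `x` stays positive below the order. -/
lemma alt_pos {x y : V₁} (hx : x ∈ D.Delta₁ W') (hy : y ∈ D.Delta₁ W')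
    (hne : D.refl₁ x ≠ D.refl₁ y) :
    ∀ m : ℕ, (m < orderOf (D.refl₁ x * D.refl₁ y) ∨
        ¬ IsOfFinOrder (D.refl₁ x * D.refl₁ y)) →
      D.ρ₁ (altEnd (D.refl₁ x) (D.refl₁ y) m) x ∈ D.PhiPos₁ := by
  set t := D.refl₁ x with hts
  set u := D.refl₁ y with hus
  have hx1 : x ∈ D.Phi₁ := hx.1.1
  have hy1 : y ∈ D.Phi₁ := hy.1.1
  have htW : t ∈ W' := D.delta_refl_mem hx
  have huW : u ∈ W' := D.delta_refl_mem hy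
  intro m
  induction m with
  | zero =>
    intro _
    have h0 : altEnd t u 0 = 1 := rfl
    rw [h0, map_one]
    simpa using hx.1
  | succ m ih =>
    intro hm
    have hm' : m < orderOf (t * u) ∨ ¬ IsOfFinOrder (t * u) := by
      rcases hm with h | h
      · exact Or.inl (by omega)
      · exact Or.inr h
    have hzm := ih hm'
    have hsucc : altEnd t u (m+1) = (if Even m then u else t) * altEnd t u m :=
      altEnd_succ_left t u m
    have happ : D.ρ₁ (altEnd t u (m+1)) x
        = D.ρ₁ (if Even m then u else t) (D.ρ₁ (altEnd t u m) x) := by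
      rw [hsucc, map_mul, Module.End.mul_apply]
    have hΦ : D.ρ₁ (altEnd t u (m+1)) x ∈ D.Phi₁ := D.rho_mem_Phi hx1 _
    rcases D.pos_or_neg hΦ with hpos | hneg
    · exact hpos
    exfalso
    have hreflzm : D.refl₁ (D.ρ₁ (altEnd t u m) x) = altEnd t u m * t * (altEnd t u m)⁻¹ :=
      D.refl_conj hx1 _
    have hWm : altEnd t u m ∈ W' := altEnd_mem htW huW m
    have hreflW : D.refl₁ (D.ρ₁ (altEnd t u m) x) ∈ W' := by
      rw [hreflzm]; exact mul_mem (mul_mem hWm htW) (inv_mem hWm)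
    have hcol : altEnd t u m * t = (if Even m then u else t) * altEnd t u m := by
      by_cases hev : Even m
      · rw [if_pos hev] at happ ⊢
        have hneg' : D.ρ₁ u (D.ρ₁ (altEnd t u m) x) ∈ D.PhiNeg₁ := by
          rw [happ] at hneg; exact hneg
        have hkey := D.key_canonical hy hzm hreflW hneg'
        rw [hreflzm] at hkey
        have h9 := congrArg (· * altEnd t u m) hkey
        simpa [mul_assoc] using h9
      · rw [if_neg hev] at happ ⊢
        have hneg' : D.ρ₁ t (D.ρ₁ (altEnd t u m) x) ∈ D.PhiNeg₁ := by
          rw [happ] at hneg; exact hneg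
        have hkey := D.key_canonical hx hzm hreflW hneg'
        rw [hreflzm] at hkey
        have h9 := congrArg (· * altEnd t u m) hkey
        simpa [mul_assoc] using h9
    have heq : altEnd u t (m+1) = altEnd t u (m+1) := by
      show altEnd t u m * t = altEnd t u (m+1)
      rw [hsucc, hcol]
    have hpow : (t*u)^(m+1) = 1 := by
      rw [← altEnd_inv_mul (D.refl_sq hx1) (D.refl_sq hy1) (m+1), heq, inv_mul_cancel]
    rcases hm with hlt | hinf
    · have : orderOf (t*u) ≤ m+1 := orderOf_le_of_pow_eq_one (Nat.succ_pos m) hpow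
      omega
    · exact hinf (isOfFinOrder_iff_pow_eq_one.2 ⟨m+1, Nat.succ_pos m, hpow⟩)

end CoxeterDatum
namespace CoxeterDatum

variable {S V₁ V₂ W : Type*} [AddCommGroup V₁] [Module ℝ V₁]
  [AddCommGroup V₂] [Module ℝ V₂] [Group W]

variable (D : CoxeterDatum S V₁ V₂ W) {W' : Subgroup W}

lemma main_half {x y : V₁} (hx : x ∈ D.Delta₁ W') (hy : y ∈ D.Delta₁ W')
    (hne : D.refl₁ x ≠ D.refl₁ y) (m : ℕ)
    (hm : m < orderOf (D.refl₁ x * D.refl₁ y) ∨ ¬ IsOfFinOrder (D.refl₁ x * D.refl₁ y))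
    {c d : ℝ} (h : D.ρ₁ (altEnd (D.refl₁ x) (D.refl₁ y) m) x = c • x + d • y) :
    0 ≤ c ∧ 0 ≤ d := by
  have hz := D.alt_pos hx hy hne m hm
  have hzW : D.refl₁ (D.ρ₁ (altEnd (D.refl₁ x) (D.refl₁ y) m) x) ∈ W' := by
    rw [D.refl_conj hx.1.1]
    exact mul_mem (mul_mem (altEnd_mem (D.delta_refl_mem hx) (D.delta_refl_mem hy) m)
      (D.delta_refl_mem hx)) (inv_mem (altEnd_mem (D.delta_refl_mem hx) (D.delta_refl_mem hy) m))
  have hd : 0 ≤ d := D.pos_root_coord_nonneg hx hy hne hz hzW h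
  have hc : 0 ≤ c := D.pos_root_coord_nonneg hy hx hne.symm hz hzW (by rw [h, add_comm])
  exact ⟨hc, hd⟩

lemma stmt_side (W' : Subgroup W) :
    ∀ x ∈ D.Delta₁ W', ∀ y ∈ D.Delta₁ W', D.refl₁ x ≠ D.refl₁ y →
      ∀ m : ℕ,
        (m < orderOf (D.refl₁ x * D.refl₁ y) ∨
          ¬ IsOfFinOrder (D.refl₁ x * D.refl₁ y)) →
        ∀ cm dm cm' dm' : ℝ,
          D.ρ₁ (altEnd (D.refl₁ x) (D.refl₁ y) m) x = cm • x + dm • y →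
          D.ρ₁ (altEnd (D.refl₁ y) (D.refl₁ x) m) y = cm' • x + dm' • y →
          0 ≤ cm ∧ 0 ≤ dm ∧ 0 ≤ cm' ∧ 0 ≤ dm' := by
  intro x hx y hy hne m hm cm dm cm' dm' h1 h2
  have k1 := D.main_half hx hy hne m hm h1
  have hinv : D.refl₁ y * D.refl₁ x = (D.refl₁ x * D.refl₁ y)⁻¹ := by
    rw [mul_inv_rev, D.refl_inv hx.1.1, D.refl_inv hy.1.1]
  have hm' : m < orderOf (D.refl₁ y * D.refl₁ x) ∨
      ¬ IsOfFinOrder (D.refl₁ y * D.refl₁ x) := by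
    rcases hm with h | h
    · exact Or.inl (by rw [hinv, orderOf_inv]; exact h)
    · exact Or.inr (by rw [hinv, isOfFinOrder_inv_iff]; exact h)
  have k2 := D.main_half hy hx hne.symm m hm' (by rw [h2, add_comm])
  exact ⟨k1.1, k1.2, k2.2, k2.1⟩

/-- The symmetric Coxeter datum, swapping the roles of `V₁` and `V₂`. -/
def symm (D : CoxeterDatum S V₁ V₂ W) : CoxeterDatum S V₂ V₁ W where
  pair := D.pair.flip
  α := D.β
  β := D.α
  α_inj := D.β_inj
  β_inj := D.α_inj
  D1 := fun s => by simpa using D.D1 s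
  D2a := D.D2b
  D2b := D.D2a
  D2c := D.D2d
  D2d := D.D2c
  D3 := fun s t h => by simpa using D.D3 t s h.symm
  D4 := fun s t h => D.D4 t s (by simpa using h)
  D5 := fun s t h => by
    rcases D.D5 s t h with ⟨m, hm, he⟩ | he
    · exact Or.inl ⟨m, hm, by simpa [mul_comm] using he⟩
    · exact Or.inr (by simpa [mul_comm] using he)
  r := D.r
  r_gen := D.r_gen
  r_ne_one := D.r_ne_one
  r_sq := D.r_sq
  ρ₁ := D.ρ₂
  ρ₂ := D.ρ₁
  ρ₁_inj := D.ρ₂_inj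
  ρ₂_inj := D.ρ₁_inj
  hr₁ := fun s v => by simpa using D.hr₂ s v
  hr₂ := fun s v => by simpa using D.hr₁ s v
  pair_inv := fun w v v' => by simpa using D.pair_inv w v' v
  phi := D.phiInv
  phiInv := D.phi
  refl₁ := D.refl₂
  refl₂ := D.refl₁
  decomp₁ := D.decomp₂
  disj₁ := D.disj₂
  decomp₂ := D.decomp₁
  disj₂ := D.disj₁
  phi_mem := D.phiInv_mem
  phiInv_mem := D.phi_mem
  phiInv_phi := D.phi_phiInv
  phi_phiInv := D.phiInv_phi
  phi_simple := fun s => by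
    have h := D.phiInv_phi (D.α s) ⟨1, s, by simp⟩
    rw [D.phi_simple] at h
    exact h
  phi_equiv := fun w y hy => by
    have hx0 : D.phiInv y ∈ { v | ∃ w s, v = D.ρ₁ w (D.α s) } := D.phiInv_mem y hy
    have hpx0 : D.phi (D.phiInv y) = y := D.phi_phiInv y hy
    have hmem : D.ρ₁ w (D.phiInv y) ∈ { v | ∃ w s, v = D.ρ₁ w (D.α s) } := by
      obtain ⟨v, s, hv⟩ := hx0
      exact ⟨w * v, s, by rw [hv, map_mul, Module.End.mul_apply]⟩
    calc D.phiInv (D.ρ₂ w y) = D.phiInv (D.ρ₂ w (D.phi (D.phiInv y))) := by rw [hpx0]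
      _ = D.phiInv (D.phi (D.ρ₁ w (D.phiInv y))) := by rw [D.phi_equiv w _ hx0]
      _ = D.ρ₁ w (D.phiInv y) := D.phiInv_phi _ hmem
  refl₁_eq := D.refl₂_eq
  refl₂_eq := D.refl₁_eq
  refl₁_act := fun y hy v => by simpa using D.refl₂_act y hy v
  refl₂_act := fun z hz v => by simpa using D.refl₁_act z hz v

end CoxeterDatum
/-- Let `W'` be a reflection subgroup of `W`, `i ∈ {1,2}`, and
`x, y ∈ Δᵢ(W')` with `r_x ≠ r_y`; let `n` be the order of `r_x r_y` (possibly
infinite).  If for `0 ≤ m < n` we write `(⋯ r_y r_x r_y) x = c_m x + d_m y` and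
`(⋯ r_x r_y r_x) y = c'_m x + d'_m y` (alternating products of `m` factors), then
`c_m, d_m, c'_m, d'_m ≥ 0`. -/
theorem stmt18 {S V₁ V₂ W : Type*} [AddCommGroup V₁] [Module ℝ V₁]
    [AddCommGroup V₂] [Module ℝ V₂] [Group W]
    (D : CoxeterDatum S V₁ V₂ W)
    (W' : Subgroup W) (hW' : D.IsReflectionSubgroup W') :
    (∀ x ∈ D.Delta₁ W', ∀ y ∈ D.Delta₁ W', D.refl₁ x ≠ D.refl₁ y →
      ∀ m : ℕ,
        (m < orderOf (D.refl₁ x * D.refl₁ y) ∨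
          ¬ IsOfFinOrder (D.refl₁ x * D.refl₁ y)) →
        ∀ cm dm cm' dm' : ℝ,
          D.ρ₁ (altEnd (D.refl₁ x) (D.refl₁ y) m) x = cm • x + dm • y →
          D.ρ₁ (altEnd (D.refl₁ y) (D.refl₁ x) m) y = cm' • x + dm' • y →
          0 ≤ cm ∧ 0 ≤ dm ∧ 0 ≤ cm' ∧ 0 ≤ dm') ∧
    (∀ x ∈ D.Delta₂ W', ∀ y ∈ D.Delta₂ W', D.refl₂ x ≠ D.refl₂ y →
      ∀ m : ℕ,
        (m < orderOf (D.refl₂ x * D.refl₂ y) ∨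
          ¬ IsOfFinOrder (D.refl₂ x * D.refl₂ y)) →
        ∀ cm dm cm' dm' : ℝ,
          D.ρ₂ (altEnd (D.refl₂ x) (D.refl₂ y) m) x = cm • x + dm • y →
          D.ρ₂ (altEnd (D.refl₂ y) (D.refl₂ x) m) y = cm' • x + dm' • y →
          0 ≤ cm ∧ 0 ≤ dm ∧ 0 ≤ cm' ∧ 0 ≤ dm') := by
  constructor
  · exact D.stmt_side W'
  · exact D.symm.stmt_side W'
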